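/- arXiv:2212.10902 — 6 statements merged into one kernel-verified Lean document; each statement's English description precedes it below -/
import Mathlib

section
/- Let Ω ⊆ ℝ³ be open, let G : Ω → ℝ be C², let ρ, θ : Ω → (0,∞) be C², and let p : (0,∞)² → ℝ be C². Assume the static balance ∇ₓ[p(ρ(x), θ(x))] = ρ(x) ∇G(x) holds for every x ∈ Ω, and that ∂p/∂θ(ρ(x), θ(x)) ≠ 0 for every x ∈ Ω. Then ∇ρ(x) × ∇G(x) = 0 and ∇θ(x) × ∇G(x) = 0 for every x ∈ Ω, i.e. both ∇ρ and ∇θ are parallel to ∇G. -/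
open Set

/-- The gradient of a scalar field on `ℝ³`, as the vector of partial derivatives. -/
noncomputable def grad3 (f : (Fin 3 → ℝ) → ℝ) (x : Fin 3 → ℝ) : Fin 3 → ℝ :=
  fun i => fderiv ℝ f x (Pi.single i 1)

lemma clm_fderiv_apply {f : (Fin 3 → ℝ) → ℝ} {x : Fin 3 → ℝ}
    (hf : DifferentiableAt ℝ (fderiv ℝ f) x) (v w : Fin 3 → ℝ) :
    fderiv ℝ (fun y => fderiv ℝ f y v) x w = fderiv ℝ (fderiv ℝ f) x w v := by
  have h : (fun y => fderiv ℝ f y v)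
      = (ContinuousLinearMap.apply ℝ ℝ v) ∘ (fderiv ℝ f) := rfl
  rw [h, fderiv_comp x ((ContinuousLinearMap.apply ℝ ℝ v).differentiableAt) hf]
  simp

lemma symm2 {f : (Fin 3 → ℝ) → ℝ} {x : Fin 3 → ℝ} (hf : ContDiffAt ℝ 2 f x) (v w : Fin 3 → ℝ) :
    fderiv ℝ (fun y => fderiv ℝ f y v) x w = fderiv ℝ (fun y => fderiv ℝ f y w) x v := by
  have hd : DifferentiableAt ℝ (fderiv ℝ f) x :=
    (hf.fderiv_right (m := 1) le_rfl).differentiableAt one_ne_zero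
  rw [clm_fderiv_apply hd, clm_fderiv_apply hd]
  exact (hf.isSymmSndFDerivAt (by simp)).eq w v

/-- if the static balance `∇(p(ρ,θ)) = ρ ∇G` holds on an open set `Ω`
and `∂p/∂θ ≠ 0` there, then both `∇ρ` and `∇θ` are parallel to `∇G`
(their cross products with `∇G` vanish). -/
theorem stmt_0
    (Ω : Set (Fin 3 → ℝ)) (hΩ : IsOpen Ω)
    (G ρ θ : (Fin 3 → ℝ) → ℝ) (p : ℝ → ℝ → ℝ)
    (hG : ContDiffOn ℝ 2 G Ω)
    (hρ : ContDiffOn ℝ 2 ρ Ω) (hθ : ContDiffOn ℝ 2 θ Ω)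
    (hρpos : ∀ x ∈ Ω, 0 < ρ x) (hθpos : ∀ x ∈ Ω, 0 < θ x)
    (hp : ContDiffOn ℝ 2 (fun q : ℝ × ℝ => p q.1 q.2) (Ioi (0:ℝ) ×ˢ Ioi (0:ℝ)))
    (hstatic : ∀ x ∈ Ω, grad3 (fun y => p (ρ y) (θ y)) x = ρ x • grad3 G x)
    (hpθ : ∀ x ∈ Ω, deriv (fun ϑ => p (ρ x) ϑ) (θ x) ≠ 0) :
    ∀ x ∈ Ω,
      crossProduct (grad3 ρ x) (grad3 G x) = 0 ∧
      crossProduct (grad3 θ x) (grad3 G x) = 0 := by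
  intro x hx
  set P : ℝ × ℝ → ℝ := fun q => p q.1 q.2 with hP
  set F : (Fin 3 → ℝ) → ℝ := fun y => p (ρ y) (θ y) with hF
  have hxn : Ω ∈ nhds x := hΩ.mem_nhds hx
  have hGx : ContDiffAt ℝ 2 G x := hG.contDiffAt hxn
  have hρx : ContDiffAt ℝ 2 ρ x := hρ.contDiffAt hxn
  have hθx : ContDiffAt ℝ 2 θ x := hθ.contDiffAt hxn
  have hzmem : (ρ x, θ x) ∈ Ioi (0:ℝ) ×ˢ Ioi (0:ℝ) := ⟨hρpos x hx, hθpos x hx⟩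
  have hPz : ContDiffAt ℝ 2 P (ρ x, θ x) :=
    hp.contDiffAt (((isOpen_Ioi.prod isOpen_Ioi)).mem_nhds hzmem)
  have hFx : ContDiffAt ℝ 2 F x := by have h := hPz.comp x (hρx.prodMk hθx); exact h
  -- differentiability facts
  have hρd : DifferentiableAt ℝ ρ x := hρx.differentiableAt two_ne_zero
  have hθd : DifferentiableAt ℝ θ x := hθx.differentiableAt two_ne_zero
  have hGd1 : DifferentiableAt ℝ (fderiv ℝ G) x :=
    (hGx.fderiv_right (m := 1) le_rfl).differentiableAt one_ne_zero
  have hGjd : ∀ v : Fin 3 → ℝ, DifferentiableAt ℝ (fun y => fderiv ℝ G y v) x := by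
    intro v
    have h : (fun y => fderiv ℝ G y v)
        = (ContinuousLinearMap.apply ℝ ℝ v) ∘ (fderiv ℝ G) := rfl
    rw [h]
    exact ((ContinuousLinearMap.apply ℝ ℝ v).differentiableAt).comp x hGd1
  set e : Fin 3 → (Fin 3 → ℝ) := fun i => Pi.single i 1 with he
  -- step A : key antisymmetry for ρ
  have key1 : ∀ i j : Fin 3,
      fderiv ℝ ρ x (e i) * fderiv ℝ G x (e j) = fderiv ℝ ρ x (e j) * fderiv ℝ G x (e i) := by
    have hA : ∀ i j : Fin 3,
        fderiv ℝ (fun y => fderiv ℝ F y (e j)) x (e i)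
          = ρ x * fderiv ℝ (fun y => fderiv ℝ G y (e j)) x (e i)
            + fderiv ℝ G x (e j) * fderiv ℝ ρ x (e i) := by
      intro i j
      have heq : (fun y => fderiv ℝ F y (e j)) =ᶠ[nhds x]
          (fun y => ρ y * fderiv ℝ G y (e j)) := by
        filter_upwards [hxn] with y hy
        have := congrFun (hstatic y hy) j
        simpa [grad3, Pi.smul_apply, smul_eq_mul] using this
      rw [heq.fderiv_eq, fderiv_fun_mul hρd (hGjd (e j))]
      simp [smul_eq_mul]
    intro i j
    have h1 := hA i j
    have h2 := hA j i
    rw [symm2 hFx (e j) (e i)] at h1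
    rw [symm2 hGx (e j) (e i)] at h1
    rw [h2] at h1
    linarith
  -- chain rule
  set pρ : ℝ := fderiv ℝ P (ρ x, θ x) (1, 0) with hpρdef
  set pθ : ℝ := fderiv ℝ P (ρ x, θ x) (0, 1) with hpθdef
  have hPd : DifferentiableAt ℝ P (ρ x, θ x) := hPz.differentiableAt two_ne_zero
  have hFder : ∀ v : Fin 3 → ℝ,
      fderiv ℝ F x v = fderiv ℝ ρ x v * pρ + fderiv ℝ θ x v * pθ := by
    intro v
    have hpair : HasFDerivAt (fun y => (ρ y, θ y))
        ((fderiv ℝ ρ x).prod (fderiv ℝ θ x)) x :=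
      (hρd.hasFDerivAt).prodMk (hθd.hasFDerivAt)
    have hcomp : HasFDerivAt F
        ((fderiv ℝ P (ρ x, θ x)).comp ((fderiv ℝ ρ x).prod (fderiv ℝ θ x))) x :=
      by have h := (hPd.hasFDerivAt).comp x hpair; exact h
    rw [hcomp.fderiv]
    have hsplit : (fderiv ℝ ρ x v, fderiv ℝ θ x v)
        = fderiv ℝ ρ x v • ((1:ℝ), (0:ℝ)) + fderiv ℝ θ x v • ((0:ℝ), (1:ℝ)) := by
      simp [Prod.ext_iff]
    simp only [ContinuousLinearMap.comp_apply, ContinuousLinearMap.prod_apply]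
    rw [hsplit, map_add, map_smul, map_smul, smul_eq_mul, smul_eq_mul]
  -- pθ is the partial derivative, hence nonzero
  have hpθx : pθ ≠ 0 := by
    have hline : HasDerivAt (fun ϑ : ℝ => (ρ x, ϑ)) ((0:ℝ), (1:ℝ)) (θ x) :=
      (hasDerivAt_const (θ x) (ρ x)).prodMk (hasDerivAt_id (θ x))
    have : HasDerivAt (fun ϑ => p (ρ x) ϑ) pθ (θ x) :=
      (hPd.hasFDerivAt).comp_hasDerivAt (θ x) hline
    rw [← this.deriv]
    exact hpθ x hx
  -- balance componentwise
  have hbal : ∀ j : Fin 3,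
      fderiv ℝ ρ x (e j) * pρ + fderiv ℝ θ x (e j) * pθ = ρ x * fderiv ℝ G x (e j) := by
    intro j
    have := congrFun (hstatic x hx) j
    simp only [grad3, Pi.smul_apply, smul_eq_mul] at this
    rw [← hFder (e j)]
    exact this
  have key2 : ∀ i j : Fin 3,
      fderiv ℝ θ x (e i) * fderiv ℝ G x (e j) = fderiv ℝ θ x (e j) * fderiv ℝ G x (e i) := by
    intro i j
    have h1 := hbal i
    have h2 := hbal j
    have h3 := key1 i j
    have : pθ * (fderiv ℝ θ x (e i) * fderiv ℝ G x (e j)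
        - fderiv ℝ θ x (e j) * fderiv ℝ G x (e i)) = 0 := by
      linear_combination fderiv ℝ G x (e j) * h1 - fderiv ℝ G x (e i) * h2 - pρ * h3
    have := mul_eq_zero.mp this
    rcases this with h | h
    · exact absurd h hpθx
    · linarith
  have hc : ∀ a : (Fin 3 → ℝ) → ℝ,
      (∀ i j : Fin 3,
        fderiv ℝ a x (e i) * fderiv ℝ G x (e j) = fderiv ℝ a x (e j) * fderiv ℝ G x (e i)) →
      crossProduct (grad3 a x) (grad3 G x) = 0 := by
    intro a ha
    simp only [he] at ha
    funext k
    fin_cases k <;>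
      simp [cross_apply, grad3] <;>
      [linarith [ha 1 2]; linarith [ha 2 0]; linarith [ha 0 1]]
  exact ⟨hc ρ key1, hc θ key2⟩
end

section
/- Let Ω ⊆ ℝ³ be open, let r : Ω → (0,∞) be C¹, let U : Ω → ℝ³ be a C¹ vector field, and let φ : (0,∞) → ℝ be C¹ with φ'(z) < 0 for all z > 0. Assume div(r U) = 0 and div(r φ(r) U) = 0 pointwise on Ω. Then ∇r(x) · U(x) = 0 for every x ∈ Ω. If moreover r(x) = r₀(x₃) for a C¹ function r₀ : ℝ → (0,∞) with r₀'(x₃) ≠ 0 for all relevant x₃, then the vertical component satisfies U₃ ≡ 0 on Ω, and consequently div_h U_h := ∂₁U₁ + ∂₂U₂ = 0 on Ω. -/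
open Set

/-- The divergence of a vector field on `ℝ³`. -/
noncomputable def div3 (V : (Fin 3 → ℝ) → (Fin 3 → ℝ)) (x : Fin 3 → ℝ) : ℝ :=
  ∑ i, fderiv ℝ (fun y => V y i) x (Pi.single i 1)

/-- if `div(r U) = 0` and `div(r φ(r) U) = 0` on an open set `Ω`,
with `r > 0` of class `C¹` and `φ' < 0` on `(0,∞)`, then `∇r · U = 0` on `Ω`;
if moreover `r(x) = r₀(x₃)` with `r₀' ≠ 0` at all relevant points, then
`U₃ ≡ 0` and `div_h U_h = ∂₁U₁ + ∂₂U₂ = 0` on `Ω`. -/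
theorem stmt_3 (Ω : Set (Fin 3 → ℝ)) (hΩ : IsOpen Ω)
    (r : (Fin 3 → ℝ) → ℝ) (U : (Fin 3 → ℝ) → (Fin 3 → ℝ)) (φ : ℝ → ℝ)
    (hr : ContDiffOn ℝ 1 r Ω) (hU : ContDiffOn ℝ 1 U Ω)
    (hrpos : ∀ x ∈ Ω, 0 < r x)
    (hφ : ContDiffOn ℝ 1 φ (Ioi 0))
    (hφ' : ∀ z : ℝ, 0 < z → deriv φ z < 0)
    (hdiv1 : ∀ x ∈ Ω, div3 (fun y => r y • U y) x = 0)
    (hdiv2 : ∀ x ∈ Ω, div3 (fun y => (r y * φ (r y)) • U y) x = 0) :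
    (∀ x ∈ Ω, (∑ i, grad3 r x i * U x i) = 0) ∧
    (∀ r₀ : ℝ → ℝ, ContDiff ℝ 1 r₀ → (∀ t : ℝ, 0 < r₀ t) →
      (∀ x ∈ Ω, r x = r₀ (x 2)) →
      (∀ x ∈ Ω, deriv r₀ (x 2) ≠ 0) →
      ∀ x ∈ Ω, U x 2 = 0 ∧
        fderiv ℝ (fun y => U y 0) x (Pi.single 0 1)
          + fderiv ℝ (fun y => U y 1) x (Pi.single 1 1) = 0) := by
  -- preliminary differentiability facts
  have hrd : ∀ x ∈ Ω, DifferentiableAt ℝ r x := fun x hx =>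
    (hr.contDiffAt (hΩ.mem_nhds hx)).differentiableAt one_ne_zero
  have hUd : ∀ x ∈ Ω, ∀ i, DifferentiableAt ℝ (fun y => U y i) x := fun x hx i =>
    differentiableAt_pi.1 ((hU.contDiffAt (hΩ.mem_nhds hx)).differentiableAt one_ne_zero) i
  -- key scalar equations at each point
  have key : ∀ x ∈ Ω, (∑ i, grad3 r x i * U x i) = 0 ∧
      r x * div3 U x + (∑ i, grad3 r x i * U x i) = 0 := by
    intro x hx
    have hrx := hrd x hx
    have hUx := hUd x hx
    have hφd : HasDerivAt φ (deriv φ (r x)) (r x) :=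
      ((hφ.contDiffAt (isOpen_Ioi.mem_nhds (hrpos x hx))).differentiableAt one_ne_zero).hasDerivAt
    have hφcomp : HasFDerivAt (fun y => φ (r y)) (deriv φ (r x) • fderiv ℝ r x) x :=
      hφd.comp_hasFDerivAt x hrx.hasFDerivAt
    -- derivative values of the products
    have h1 : ∀ i : Fin 3, fderiv ℝ (fun y => r y * U y i) x (Pi.single i 1)
        = r x * fderiv ℝ (fun y => U y i) x (Pi.single i 1) + U x i * grad3 r x i := by
      intro i
      rw [fderiv_fun_mul hrx (hUx i)]
      simp [grad3, smul_eq_mul]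
    have hs : HasFDerivAt (fun y => r y * φ (r y))
        (r x • (deriv φ (r x) • fderiv ℝ r x) + φ (r x) • fderiv ℝ r x) x :=
      hrx.hasFDerivAt.mul hφcomp
    have h2 : ∀ i : Fin 3, fderiv ℝ (fun y => (r y * φ (r y)) * U y i) x (Pi.single i 1)
        = (r x * φ (r x)) * fderiv ℝ (fun y => U y i) x (Pi.single i 1)
          + U x i * ((r x * deriv φ (r x) + φ (r x)) * grad3 r x i) := by
      intro i
      rw [fderiv_fun_mul hs.differentiableAt (hUx i), hs.fderiv]
      simp [grad3, smul_eq_mul]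
      ring
    have e1 : r x * div3 U x + (∑ i, grad3 r x i * U x i) = 0 := by
      have := hdiv1 x hx
      simp only [div3, Pi.smul_apply, smul_eq_mul] at this ⊢
      rw [Fin.sum_univ_three, h1 0, h1 1, h1 2] at this
      rw [Fin.sum_univ_three, Fin.sum_univ_three]
      linarith
    have e2 : (r x * φ (r x)) * div3 U x
        + (r x * deriv φ (r x) + φ (r x)) * (∑ i, grad3 r x i * U x i) = 0 := by
      have := hdiv2 x hx
      simp only [div3, Pi.smul_apply, smul_eq_mul] at this ⊢
      rw [Fin.sum_univ_three, h2 0, h2 1, h2 2] at this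
      rw [Fin.sum_univ_three, Fin.sum_univ_three]
      linarith
    have hfac : r x * deriv φ (r x) ≠ 0 :=
      mul_ne_zero (ne_of_gt (hrpos x hx)) (ne_of_lt (hφ' _ (hrpos x hx)))
    have hG : r x * deriv φ (r x) * (∑ i, grad3 r x i * U x i) = 0 := by
      linear_combination e2 - φ (r x) * e1
    exact ⟨by
      have := mul_eq_zero.1 hG
      tauto, e1⟩
  refine ⟨fun x hx => (key x hx).1, ?_⟩
  intro r₀ hr₀ hr₀pos hrr₀ hr₀' x hx
  -- gradient of r at any point of Ω
  have hgr : ∀ y ∈ Ω, grad3 r y 0 = 0 ∧ grad3 r y 1 = 0 ∧ grad3 r y 2 = deriv r₀ (y 2) := by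
    intro y hy
    have heq : r =ᶠ[nhds y] (fun z => r₀ (z 2)) :=
      Filter.eventuallyEq_of_mem (hΩ.mem_nhds hy) hrr₀
    have hc : HasFDerivAt (fun z : Fin 3 → ℝ => r₀ (z 2))
        (deriv r₀ (y 2) • (ContinuousLinearMap.proj 2 : (Fin 3 → ℝ) →L[ℝ] ℝ)) y :=
      (hr₀.differentiable one_ne_zero (y 2)).hasDerivAt.comp_hasFDerivAt y
        (hasFDerivAt_apply 2 y)
    have hfd : fderiv ℝ r y
        = deriv r₀ (y 2) • (ContinuousLinearMap.proj 2 : (Fin 3 → ℝ) →L[ℝ] ℝ) := by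
      rw [heq.fderiv_eq, hc.fderiv]
    refine ⟨?_, ?_, ?_⟩ <;> simp [grad3, hfd]
  have hU2all : ∀ y ∈ Ω, U y 2 = 0 := by
    intro y hy
    have hG := (key y hy).1
    rw [Fin.sum_univ_three, (hgr y hy).1, (hgr y hy).2.1, (hgr y hy).2.2] at hG
    simp at hG
    rcases hG with h | h
    · exact absurd h (hr₀' y hy)
    · exact h
  refine ⟨hU2all x hx, ?_⟩
  have hU2' : fderiv ℝ (fun y => U y 2) x = 0 := by
    have heq : (fun y => U y 2) =ᶠ[nhds x] (fun _ => (0:ℝ)) :=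
      Filter.eventuallyEq_of_mem (hΩ.mem_nhds hx) hU2all
    rw [heq.fderiv_eq, fderiv_fun_const]
    rfl
  have e1 := (key x hx).2
  have hG := (key x hx).1
  rw [hG, add_zero] at e1
  have hA : div3 U x = 0 := by
    rcases mul_eq_zero.1 e1 with h | h
    · exact absurd h (ne_of_gt (hrpos x hx))
    · exact h
  rw [div3, Fin.sum_univ_three, hU2'] at hA
  simpa using hA
end

section
/- Let p, e : (0,∞)² → ℝ be C¹ functions of (ρ, θ) satisfying the monoatomic gas relation p(ρ,θ) = (2/3) ρ e(ρ,θ) and the Maxwell (Gibbs compatibility) relation ρ² ∂e/∂ρ(ρ,θ) = p(ρ,θ) − θ ∂p/∂θ(ρ,θ) for all ρ, θ > 0. Then p has the scaling form p(ρ,θ) = θ^{5/2} P(ρ θ^{−3/2}) for all ρ, θ > 0, where P : (0,∞) → ℝ is defined by P(Z) = p(Z, 1). Equivalently, p satisfies the Euler-type PDE (3/2) ρ ∂p/∂ρ + θ ∂p/∂θ = (5/2) p on (0,∞)². -/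
open Set

/-- a `C¹` pressure/energy pair satisfying the monoatomic relation
`p = (2/3) ρ e` and the Maxwell relation `ρ² ∂e/∂ρ = p − θ ∂p/∂θ` has the scaling
form `p(ρ,θ) = θ^{5/2} P(ρ θ^{−3/2})` with `P(Z) = p(Z,1)`; equivalently, `p`
satisfies the Euler-type PDE `(3/2) ρ ∂p/∂ρ + θ ∂p/∂θ = (5/2) p` on `(0,∞)²`. -/
theorem stmt_4 (p e : ℝ → ℝ → ℝ)
    (hp : ContDiffOn ℝ 1 (fun q : ℝ × ℝ => p q.1 q.2) (Ioi (0:ℝ) ×ˢ Ioi (0:ℝ)))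
    (he : ContDiffOn ℝ 1 (fun q : ℝ × ℝ => e q.1 q.2) (Ioi (0:ℝ) ×ˢ Ioi (0:ℝ)))
    (hmono : ∀ ρ θ : ℝ, 0 < ρ → 0 < θ → p ρ θ = 2/3 * ρ * e ρ θ)
    (hmax : ∀ ρ θ : ℝ, 0 < ρ → 0 < θ →
      ρ^2 * deriv (fun a => e a θ) ρ = p ρ θ - θ * deriv (fun b => p ρ b) θ) :
    (∀ ρ θ : ℝ, 0 < ρ → 0 < θ →
      p ρ θ = θ ^ ((5:ℝ)/2) * p (ρ * θ ^ (-(3:ℝ)/2)) 1) ∧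
    (∀ ρ θ : ℝ, 0 < ρ → 0 < θ →
      3/2 * ρ * deriv (fun a => p a θ) ρ + θ * deriv (fun b => p ρ b) θ
        = 5/2 * p ρ θ) := by
  have hopen : IsOpen (Ioi (0:ℝ) ×ˢ Ioi (0:ℝ)) := isOpen_Ioi.prod isOpen_Ioi
  have hFdiff : ∀ x y : ℝ, 0 < x → 0 < y →
      DifferentiableAt ℝ (fun q : ℝ × ℝ => p q.1 q.2) (x, y) := by
    intro x y hx hy
    exact (hp.differentiableOn one_ne_zero).differentiableAt (hopen.mem_nhds ⟨hx, hy⟩)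
  have hEdiff : ∀ x y : ℝ, 0 < x → 0 < y →
      DifferentiableAt ℝ (fun q : ℝ × ℝ => e q.1 q.2) (x, y) := by
    intro x y hx hy
    exact (he.differentiableOn one_ne_zero).differentiableAt (hopen.mem_nhds ⟨hx, hy⟩)
  have hpx : ∀ x y : ℝ, 0 < x → 0 < y →
      HasDerivAt (fun a => p a y)
        (fderiv ℝ (fun q : ℝ × ℝ => p q.1 q.2) (x, y) (1, 0)) x := by
    intro x y hx hy
    have h2 : HasDerivAt (fun a : ℝ => (a, y)) ((1:ℝ), (0:ℝ)) x :=
      (hasDerivAt_id x).prodMk (hasDerivAt_const x y)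
    exact (hFdiff x y hx hy).hasFDerivAt.comp_hasDerivAt x h2
  have hpy : ∀ x y : ℝ, 0 < x → 0 < y →
      HasDerivAt (fun b => p x b)
        (fderiv ℝ (fun q : ℝ × ℝ => p q.1 q.2) (x, y) (0, 1)) y := by
    intro x y hx hy
    have h2 : HasDerivAt (fun b : ℝ => (x, b)) ((0:ℝ), (1:ℝ)) y :=
      (hasDerivAt_const y x).prodMk (hasDerivAt_id y)
    exact (hFdiff x y hx hy).hasFDerivAt.comp_hasDerivAt y h2
  have hex : ∀ x y : ℝ, 0 < x → 0 < y →
      HasDerivAt (fun a => e a y)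
        (fderiv ℝ (fun q : ℝ × ℝ => e q.1 q.2) (x, y) (1, 0)) x := by
    intro x y hx hy
    have h2 : HasDerivAt (fun a : ℝ => (a, y)) ((1:ℝ), (0:ℝ)) x :=
      (hasDerivAt_id x).prodMk (hasDerivAt_const x y)
    exact (hEdiff x y hx hy).hasFDerivAt.comp_hasDerivAt x h2
  -- Part 2: the PDE
  have hpde : ∀ ρ θ : ℝ, 0 < ρ → 0 < θ →
      3/2 * ρ * deriv (fun a => p a θ) ρ + θ * deriv (fun b => p ρ b) θ
        = 5/2 * p ρ θ := by
    intro ρ θ hρ hθ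
    set e' := fderiv ℝ (fun q : ℝ × ℝ => e q.1 q.2) (ρ, θ) (1, 0) with he'
    have heρ : HasDerivAt (fun a => e a θ) e' ρ := hex ρ θ hρ hθ
    have hprod : HasDerivAt (fun a => 2/3 * a * e a θ) (2/3 * e ρ θ + 2/3 * ρ * e') ρ := by
      have h1 : HasDerivAt (fun a : ℝ => 2/3 * a) (2/3 : ℝ) ρ := by
        simpa using (hasDerivAt_id ρ).const_mul (2/3 : ℝ)
      have := h1.mul heρ
      exact this
    have heq : (fun a => p a θ) =ᶠ[nhds ρ] (fun a => 2/3 * a * e a θ) := by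
      filter_upwards [isOpen_Ioi.mem_nhds hρ] with a ha
      exact hmono a θ ha hθ
    have hP : HasDerivAt (fun a => p a θ) (2/3 * e ρ θ + 2/3 * ρ * e') ρ :=
      hprod.congr_of_eventuallyEq heq
    have hd1 : deriv (fun a => p a θ) ρ = 2/3 * e ρ θ + 2/3 * ρ * e' := hP.deriv
    have hd2 : deriv (fun a => e a θ) ρ = e' := heρ.deriv
    have hM := hmax ρ θ hρ hθ
    rw [hd2] at hM
    have hm := hmono ρ θ hρ hθ
    rw [hd1]
    nlinarith [hM, hm]
  refine ⟨?_, hpde⟩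
  -- fderiv form of the PDE
  have hL : ∀ x y : ℝ, 0 < x → 0 < y →
      3/2 * x * (fderiv ℝ (fun q : ℝ × ℝ => p q.1 q.2) (x, y) (1, 0))
        + y * (fderiv ℝ (fun q : ℝ × ℝ => p q.1 q.2) (x, y) (0, 1)) = 5/2 * p x y := by
    intro x y hx hy
    rw [← (hpx x y hx hy).deriv, ← (hpy x y hx hy).deriv]
    exact hpde x y hx hy
  intro ρ θ hρ hθ
  set c := ρ * θ ^ (-(3:ℝ)/2) with hc
  have hcpos : 0 < c := mul_pos hρ (Real.rpow_pos_of_pos hθ _)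
  set f := fun t : ℝ => t ^ (-(5:ℝ)/2) * p (c * t ^ ((3:ℝ)/2)) t with hf
  have hderiv : ∀ t : ℝ, 0 < t → HasDerivAt f 0 t := by
    intro t ht
    have hxpos : 0 < c * t ^ ((3:ℝ)/2) := mul_pos hcpos (Real.rpow_pos_of_pos ht _)
    have h32 : HasDerivAt (fun s : ℝ => s ^ ((3:ℝ)/2)) ((3:ℝ)/2 * t ^ ((3:ℝ)/2 - 1)) t :=
      Real.hasDerivAt_rpow_const (Or.inl ht.ne')
    have hγ : HasDerivAt (fun s : ℝ => (c * s ^ ((3:ℝ)/2), s))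
        ((c * ((3:ℝ)/2 * t ^ ((3:ℝ)/2 - 1)), (1:ℝ))) t :=
      (h32.const_mul c).prodMk (hasDerivAt_id t)
    set A := fderiv ℝ (fun q : ℝ × ℝ => p q.1 q.2) (c * t ^ ((3:ℝ)/2), t) (1, 0) with hA
    set B := fderiv ℝ (fun q : ℝ × ℝ => p q.1 q.2) (c * t ^ ((3:ℝ)/2), t) (0, 1) with hB
    have hcomp : HasDerivAt (fun s => p (c * s ^ ((3:ℝ)/2)) s)
        (c * ((3:ℝ)/2 * t ^ ((3:ℝ)/2 - 1)) * A + B) t := by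
      have hfd : HasFDerivAt (fun q : ℝ × ℝ => p q.1 q.2)
          (fderiv ℝ (fun q : ℝ × ℝ => p q.1 q.2) (c * t ^ ((3:ℝ)/2), t))
          ((fun s : ℝ => (c * s ^ ((3:ℝ)/2), s)) t) := (hFdiff _ t hxpos ht).hasFDerivAt
      have hh : HasDerivAt ((fun q : ℝ × ℝ => p q.1 q.2) ∘ (fun s : ℝ => (c * s ^ ((3:ℝ)/2), s)))
          (fderiv ℝ (fun q : ℝ × ℝ => p q.1 q.2) (c * t ^ ((3:ℝ)/2), t)
            ((c * ((3:ℝ)/2 * t ^ ((3:ℝ)/2 - 1)), (1:ℝ)))) t := by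
        refine HasFDerivAt.comp_hasDerivAt t ?_ hγ
        exact hfd
      refine hh.congr_deriv (Eq.symm ?_)
      have : ((c * ((3:ℝ)/2 * t ^ ((3:ℝ)/2 - 1)), (1:ℝ))) =
          (c * ((3:ℝ)/2 * t ^ ((3:ℝ)/2 - 1))) • ((1:ℝ), (0:ℝ)) + (1:ℝ) • ((0:ℝ), (1:ℝ)) := by
        simp
      rw [this, map_add, map_smul, map_smul]
      simp [hA, hB]
    have hpow : HasDerivAt (fun s : ℝ => s ^ (-(5:ℝ)/2)) ((-(5:ℝ)/2) * t ^ (-(5:ℝ)/2 - 1)) t :=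
      Real.hasDerivAt_rpow_const (Or.inl ht.ne')
    have hmul := hpow.mul hcomp
    refine hmul.congr_deriv (Eq.symm ?_)
    have hLt := hL _ t hxpos ht
    rw [← hA, ← hB] at hLt
    have e1 : t ^ ((3:ℝ)/2 - 1) = t ^ ((3:ℝ)/2) * t⁻¹ := by
      rw [Real.rpow_sub ht, Real.rpow_one]; ring
    have e2 : t ^ (-(5:ℝ)/2 - 1) = t ^ (-(5:ℝ)/2) * t⁻¹ := by
      rw [Real.rpow_sub ht, Real.rpow_one]; ring
    have h1 : t * t⁻¹ = 1 := mul_inv_cancel₀ ht.ne'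
    rw [e1, e2]
    linear_combination (-(t ^ (-(5:ℝ)/2) * t⁻¹)) * hLt + (t ^ (-(5:ℝ)/2) * B) * h1
  -- constancy of f on (0,∞)
  have hconst : f θ = f 1 := by
    set a := min θ 1 with ha
    set b := max θ 1 with hb
    have hapos : 0 < a := lt_min hθ one_pos
    have hsub : Icc a b ⊆ Ioi (0:ℝ) := fun x hx => lt_of_lt_of_le hapos hx.1
    have key : ∀ x ∈ Icc a b, f x = f a := by
      apply constant_of_has_deriv_right_zero
      · intro x hx
        exact ((hderiv x (hsub hx)).continuousAt).continuousWithinAt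
      · intro x hx
        exact ((hderiv x (hsub ⟨hx.1, hx.2.le⟩)).hasDerivWithinAt)
    have h1 : f θ = f a := key θ ⟨min_le_left _ _, le_max_left _ _⟩
    have h2 : f 1 = f a := key 1 ⟨min_le_right _ _, le_max_right _ _⟩
    rw [h1, h2]
  have hfθ : f θ = θ ^ (-(5:ℝ)/2) * p ρ θ := by
    have : c * θ ^ ((3:ℝ)/2) = ρ := by
      rw [hc, mul_assoc, ← Real.rpow_add hθ]
      norm_num
    rw [hf]; simp only []; rw [this]
  have hf1 : f 1 = p c 1 := by
    rw [hf]; simp [Real.one_rpow]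
  rw [hfθ, hf1] at hconst
  have h5 : θ ^ ((5:ℝ)/2) * θ ^ (-(5:ℝ)/2) = 1 := by
    rw [← Real.rpow_add hθ]; norm_num
  calc p ρ θ = θ ^ ((5:ℝ)/2) * θ ^ (-(5:ℝ)/2) * p ρ θ := by rw [h5, one_mul]
    _ = θ ^ ((5:ℝ)/2) * (θ ^ (-(5:ℝ)/2) * p ρ θ) := by ring
    _ = θ ^ ((5:ℝ)/2) * p c 1 := by rw [hconst]
end

section
/- Let a > 0 and let P : [0,∞) → ℝ be C¹ with P(0) = 0, P'(Z) > 0 for all Z ≥ 0, (5/3) P(Z) − P'(Z) Z > 0 for all Z > 0, and P(Z)/Z^{5/3} → p_∞ > 0 as Z → ∞. Define e(ρ,θ) = (3/2) (θ^{5/2}/ρ) P(ρ θ^{−3/2}) + (a/ρ) θ⁴ for ρ, θ > 0. Then there exist constants c₁, c₂ > 0 such that c₁ (ρ^{5/3} + θ⁴) ≤ ρ e(ρ,θ) ≤ c₂ (1 + ρ^{5/3} + θ⁴) for all ρ, θ > 0. -/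
open Set

/-- Internal energy of a monoatomic gas with radiation:
`e(ρ,θ) = (3/2)(θ^{5/2}/ρ) P(ρ θ^{−3/2}) + (a/ρ) θ⁴`. -/
noncomputable def eGas (a : ℝ) (P : ℝ → ℝ) (ρ θ : ℝ) : ℝ :=
  3/2 * (θ ^ ((5:ℝ)/2) / ρ) * P (ρ * θ ^ (-(3:ℝ)/2)) + a/ρ * θ^4

set_option maxHeartbeats 2000000 in
/-- under the structural hypotheses on `P` (thermodynamic stability
and `P(Z)/Z^{5/3} → p_∞ > 0`), the total energy satisfies the two-sided bound
`c₁ (ρ^{5/3} + θ⁴) ≤ ρ e(ρ,θ) ≤ c₂ (1 + ρ^{5/3} + θ⁴)` on `(0,∞)²`. -/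
theorem stmt_8 (a : ℝ) (ha : 0 < a) (P : ℝ → ℝ) (pinf : ℝ) (hpinf : 0 < pinf)
    (hP : ContDiffOn ℝ 1 P (Ici 0)) (hP0 : P 0 = 0)
    (hP' : ∀ Z : ℝ, 0 ≤ Z → 0 < derivWithin P (Ici 0) Z)
    (hstab : ∀ Z : ℝ, 0 < Z → 0 < 5/3 * P Z - derivWithin P (Ici 0) Z * Z)
    (hlim : Filter.Tendsto (fun Z => P Z / Z ^ ((5:ℝ)/3)) Filter.atTop (nhds pinf)) :
    ∃ c₁ : ℝ, 0 < c₁ ∧ ∃ c₂ : ℝ, 0 < c₂ ∧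
      ∀ ρ θ : ℝ, 0 < ρ → 0 < θ →
        c₁ * (ρ ^ ((5:ℝ)/3) + θ^4) ≤ ρ * eGas a P ρ θ ∧
        ρ * eGas a P ρ θ ≤ c₂ * (1 + ρ ^ ((5:ℝ)/3) + θ^4) := by
  have hPc : ContinuousOn P (Ici 0) := hP.continuousOn
  -- P has a derivative (equal to derivWithin over Ici 0) at every positive point
  have hdiff : ∀ x : ℝ, 0 < x → HasDerivAt P (derivWithin P (Ici 0) x) x := by
    intro x hx
    have hn : Ici (0:ℝ) ∈ nhds x := Ici_mem_nhds hx
    have h := (hP.differentiableOn one_ne_zero) x (le_of_lt hx)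
    have h' := h.differentiableAt hn
    rw [derivWithin_of_mem_nhds hn]
    exact h'.hasDerivAt
  -- P is monotone on [0,∞)
  have hmono : MonotoneOn P (Ici 0) := by
    apply monotoneOn_of_deriv_nonneg (convex_Ici 0) hPc
    · intro x hx
      rw [interior_Ici] at hx
      exact (hdiff x hx).differentiableAt.differentiableWithinAt
    · intro x hx
      rw [interior_Ici] at hx
      rw [(hdiff x hx).deriv]
      exact (hP' x hx.le).le
  -- the derivative is continuous on [0,∞)
  have hd : ContinuousOn (derivWithin P (Ici 0)) (Ici 0) :=
    hP.continuousOn_derivWithin (uniqueDiffOn_Ici 0) le_rfl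
  -- m : positive lower bound for the derivative on [0,1]
  obtain ⟨x₀, hx₀, hminx⟩ := isCompact_Icc.exists_isMinOn (nonempty_Icc.2 zero_le_one)
    (hd.mono (Icc_subset_Ici_self))
  set m := derivWithin P (Ici 0) x₀ with hm_def
  have hm : 0 < m := hP' x₀ hx₀.1
  -- P Z ≥ m Z on [0,1]
  have hPlow : ∀ Z ∈ Icc (0:ℝ) 1, m * Z ≤ P Z := by
    have hmonoQ : MonotoneOn (fun z => P z - m * z) (Icc 0 1) := by
      apply monotoneOn_of_deriv_nonneg (convex_Icc 0 1)
      · exact (hPc.mono Icc_subset_Ici_self).sub (continuousOn_const.mul continuousOn_id)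
      · intro x hx
        rw [interior_Icc] at hx
        exact (((hdiff x hx.1).sub ((hasDerivAt_id x).const_mul m)).differentiableAt).differentiableWithinAt
      · intro x hx
        rw [interior_Icc] at hx
        have hder : HasDerivAt (fun z => P z - m * z) (derivWithin P (Ici 0) x - m * 1) x :=
          (hdiff x hx.1).sub ((hasDerivAt_id x).const_mul m)
        rw [hder.deriv]
        have := hminx ⟨hx.1.le, hx.2.le⟩
        simp only [mul_one, sub_nonneg]
        exact this
    intro Z hZ
    have := hmonoQ ⟨le_refl 0, zero_le_one⟩ hZ hZ.1
    simp only [hP0, mul_zero, sub_zero, zero_sub] at this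
    linarith
  -- P is positive on (0,∞)
  have hPpos : ∀ Z : ℝ, 0 < Z → 0 < P Z := by
    intro Z hZ
    rcases le_or_gt Z 1 with h1 | h1
    · have := hPlow Z ⟨hZ.le, h1⟩
      nlinarith
    · have h2 := hmono (mem_Ici.2 zero_le_one) (mem_Ici.2 (by linarith : (0:ℝ) ≤ Z)) h1.le
      have := hPlow 1 ⟨zero_le_one, le_refl 1⟩
      nlinarith
  set g : ℝ → ℝ := fun Z => P Z / Z ^ ((5:ℝ)/3) with hg_def
  -- eventual bounds on g at infinity
  have hev : ∀ᶠ Z in Filter.atTop, pinf/2 < g Z ∧ g Z < pinf + 1 := by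
    have h1 : ∀ᶠ Z in Filter.atTop, pinf/2 < g Z := hlim.eventually_const_lt (by linarith)
    have h2 : ∀ᶠ Z in Filter.atTop, g Z < pinf + 1 := hlim.eventually_lt_const (by linarith)
    exact h1.and h2
  obtain ⟨A₀, hA₀⟩ := Filter.eventually_atTop.1 hev
  set A : ℝ := max A₀ 1 with hA_def
  have hA1 : (1:ℝ) ≤ A := le_max_right _ _
  -- g is continuous on [1, A]
  have hgc : ContinuousOn g (Icc 1 A) := by
    apply ContinuousOn.div
    · exact hPc.mono (fun x hx => le_trans zero_le_one hx.1)
    · exact continuousOn_id.rpow_const (fun x _ => Or.inr (by norm_num))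
    · intro x hx
      exact ne_of_gt (Real.rpow_pos_of_pos (lt_of_lt_of_le one_pos hx.1) _)
  obtain ⟨zmin, hzmin, hgmin⟩ := isCompact_Icc.exists_isMinOn (nonempty_Icc.2 hA1) hgc
  obtain ⟨zmax, hzmax, hgmax⟩ := isCompact_Icc.exists_isMaxOn (nonempty_Icc.2 hA1) hgc
  have hgminpos : 0 < g zmin := by
    apply div_pos (hPpos zmin (lt_of_lt_of_le one_pos hzmin.1))
    exact Real.rpow_pos_of_pos (lt_of_lt_of_le one_pos hzmin.1) _
  set m₁ : ℝ := min (g zmin) (pinf/2) with hm₁_def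
  set M₁ : ℝ := max (g zmax) (pinf + 1) with hM₁_def
  have hm₁pos : 0 < m₁ := lt_min hgminpos (by linarith)
  -- bounds on g on [1, ∞)
  have hg1 : ∀ Z : ℝ, 1 ≤ Z → m₁ ≤ g Z ∧ g Z ≤ M₁ := by
    intro Z hZ
    rcases le_or_gt Z A with hZA | hZA
    · constructor
      · exact le_trans (min_le_left _ _) (hgmin ⟨hZ, hZA⟩)
      · exact le_trans (hgmax ⟨hZ, hZA⟩) (le_max_left _ _)
    · have hZA₀ : A₀ ≤ Z := le_trans (le_trans (le_max_left _ _) hZA.le) (le_refl Z)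
      obtain ⟨h1, h2⟩ := hA₀ Z hZA₀
      exact ⟨le_trans (min_le_right _ _) h1.le, le_trans h2.le (le_max_right _ _)⟩
  refine ⟨min (3/2 * min m m₁) a, lt_min (by positivity) ha,
    3/2 * max (P 1) M₁ + a, by
      have hP1 : 0 < P 1 := hPpos 1 one_pos
      have := le_max_left (P 1) M₁
      nlinarith, ?_⟩
  intro ρ θ hρ hθ
  set Z : ℝ := ρ * θ ^ (-(3:ℝ)/2) with hZ_def
  have hθm : (0:ℝ) < θ ^ (-(3:ℝ)/2) := Real.rpow_pos_of_pos hθ _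
  have hZpos : 0 < Z := mul_pos hρ hθm
  have hθ52 : (0:ℝ) < θ ^ ((5:ℝ)/2) := Real.rpow_pos_of_pos hθ _
  -- the energy identity
  have hE : ρ * eGas a P ρ θ = 3/2 * (θ ^ ((5:ℝ)/2) * P Z) + a * θ^4 := by
    unfold eGas
    field_simp
    rw [hZ_def, neg_div]
  -- ρ = Z * θ^{3/2}
  have hρeq : Z * θ ^ ((3:ℝ)/2) = ρ := by
    rw [hZ_def, mul_assoc, ← Real.rpow_add hθ]
    norm_num
  -- key identity: θ^{5/2} Z^{5/3} = ρ^{5/3}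
  have key1 : θ ^ ((5:ℝ)/2) * Z ^ ((5:ℝ)/3) = ρ ^ ((5:ℝ)/3) := by
    rw [← hρeq, Real.mul_rpow hZpos.le (Real.rpow_pos_of_pos hθ _).le,
      ← Real.rpow_mul hθ.le]
    rw [show (3:ℝ)/2 * (5/3) = 5/2 by norm_num]
    ring
  -- ρ^{5/3} = Z^{2/3} ρ θ
  have key2 : ρ ^ ((5:ℝ)/3) = Z ^ ((2:ℝ)/3) * (ρ * θ) := by
    rw [← hρeq, Real.mul_rpow hZpos.le (Real.rpow_pos_of_pos hθ _).le,
      ← Real.rpow_mul hθ.le]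
    rw [show (5:ℝ)/3 = 2/3 + 1 by norm_num, Real.rpow_add hZpos, Real.rpow_one,
      show (3:ℝ)/2 * (2/3 + 1) = 3/2 + 1 by norm_num, Real.rpow_add hθ, Real.rpow_one]
    ring
  -- for Z ≥ 1 : θ^{5/2} P Z = ρ^{5/3} g Z
  have keyg : θ ^ ((5:ℝ)/2) * P Z = ρ ^ ((5:ℝ)/3) * g Z := by
    rw [hg_def]
    rw [← key1]
    field_simp [ne_of_gt (Real.rpow_pos_of_pos hZpos ((5:ℝ)/3))]
  have hρ53pos : (0:ℝ) < ρ ^ ((5:ℝ)/3) := Real.rpow_pos_of_pos hρ _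
  have hθ4pos : (0:ℝ) < θ^4 := by positivity
  -- core lower bound
  have hcore_low : min m m₁ * ρ ^ ((5:ℝ)/3) ≤ θ ^ ((5:ℝ)/2) * P Z := by
    rcases le_or_gt Z 1 with hZ1 | hZ1
    · have h1 : m * Z ≤ P Z := hPlow Z ⟨hZpos.le, hZ1⟩
      -- θ^{5/2} Z = ρ θ
      have h2 : θ ^ ((5:ℝ)/2) * Z = ρ * θ := by
        rw [hZ_def]
        rw [show ρ * θ ^ (-(3:ℝ)/2) = θ ^ (-(3:ℝ)/2) * ρ by ring, ← mul_assoc,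
          ← Real.rpow_add hθ]
        norm_num
        ring
      have h3 : Z ^ ((2:ℝ)/3) ≤ 1 := Real.rpow_le_one hZpos.le hZ1 (by norm_num)
      have h4 : ρ ^ ((5:ℝ)/3) ≤ ρ * θ := by
        rw [key2]
        nlinarith [mul_pos hρ hθ]
      have h5 : θ ^ ((5:ℝ)/2) * (m * Z) ≤ θ ^ ((5:ℝ)/2) * P Z :=
        mul_le_mul_of_nonneg_left h1 hθ52.le
      have h6 : θ ^ ((5:ℝ)/2) * (m * Z) = m * (ρ * θ) := by rw [← h2]; ring
      have h7 : min m m₁ ≤ m := min_le_left _ _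
      calc min m m₁ * ρ ^ ((5:ℝ)/3) ≤ m * ρ ^ ((5:ℝ)/3) :=
            mul_le_mul_of_nonneg_right h7 hρ53pos.le
        _ ≤ m * (ρ * θ) := mul_le_mul_of_nonneg_left h4 hm.le
        _ = θ ^ ((5:ℝ)/2) * (m * Z) := h6.symm
        _ ≤ θ ^ ((5:ℝ)/2) * P Z := h5
    · have h1 := (hg1 Z hZ1.le).1
      rw [keyg]
      have h7 : min m m₁ ≤ m₁ := min_le_right _ _
      calc min m m₁ * ρ ^ ((5:ℝ)/3) ≤ m₁ * ρ ^ ((5:ℝ)/3) :=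
            mul_le_mul_of_nonneg_right h7 hρ53pos.le
        _ ≤ g Z * ρ ^ ((5:ℝ)/3) := mul_le_mul_of_nonneg_right h1 hρ53pos.le
        _ = ρ ^ ((5:ℝ)/3) * g Z := mul_comm _ _
  -- core upper bound
  have hcore_up : θ ^ ((5:ℝ)/2) * P Z ≤ max (P 1) M₁ * (1 + ρ ^ ((5:ℝ)/3) + θ^4) := by
    have hP1 : 0 < P 1 := hPpos 1 one_pos
    have hmax1 : P 1 ≤ max (P 1) M₁ := le_max_left _ _
    have hmax2 : M₁ ≤ max (P 1) M₁ := le_max_right _ _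
    rcases le_or_gt Z 1 with hZ1 | hZ1
    · have h1 : P Z ≤ P 1 := hmono (mem_Ici.2 hZpos.le) (mem_Ici.2 zero_le_one) hZ1
      have h2 : θ ^ ((5:ℝ)/2) ≤ 1 + θ^4 := by
        rcases le_or_gt θ 1 with hθ1 | hθ1
        · have := Real.rpow_le_one hθ.le hθ1 (by norm_num : (0:ℝ) ≤ 5/2)
          nlinarith
        · have h3 : θ ^ ((5:ℝ)/2) ≤ θ ^ (4:ℕ) := by
            rw [← Real.rpow_natCast θ 4]
            exact Real.rpow_le_rpow_of_exponent_le hθ1.le (by norm_num)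
          norm_num at h3 ⊢
          linarith
      have h5 : θ ^ ((5:ℝ)/2) * P Z ≤ θ ^ ((5:ℝ)/2) * P 1 :=
        mul_le_mul_of_nonneg_left h1 hθ52.le
      nlinarith
    · have h1 := (hg1 Z hZ1.le).2
      rw [keyg]
      have hc : ρ ^ ((5:ℝ)/3) * g Z ≤ ρ ^ ((5:ℝ)/3) * max (P 1) M₁ :=
        mul_le_mul_of_nonneg_left (le_trans h1 hmax2) hρ53pos.le
      nlinarith [lt_of_lt_of_le hP1 hmax1]
  constructor
  · rw [hE]
    have h1 : min (3/2 * min m m₁) a ≤ 3/2 * min m m₁ := min_le_left _ _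
    have h2 : min (3/2 * min m m₁) a ≤ a := min_le_right _ _
    nlinarith [hcore_low, mul_le_mul_of_nonneg_right h1 hρ53pos.le,
      mul_le_mul_of_nonneg_right h2 hθ4pos.le]
  · rw [hE]
    nlinarith [hcore_up, hρ53pos, hθ4pos, ha]
end

section
/- Let c > 0 and let P : (0,∞) → ℝ, 𝒮 : (0,∞) → ℝ be C¹ with 𝒮'(Z) = −(3/2) ((5/3) P(Z) − P'(Z) Z)/Z², where 0 < (5/3) P(Z) − P'(Z) Z ≤ c Z for all Z > 0, and suppose 𝒮(Z) → 0 as Z → ∞. Define the molecular entropy s_m(ρ,θ) = 𝒮(ρ θ^{−3/2}) for ρ, θ > 0. Then s_m(ρ,θ) > 0 for all ρ, θ > 0, and there exists a constant C > 0 such that s_m(ρ,θ) ≤ C (1 + |log ρ| + max(log θ, 0)) for all ρ, θ > 0. -/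
open Set

/-- if `𝒮' = −(3/2)((5/3)P − P'Z)/Z²` with
`0 < (5/3)P(Z) − P'(Z)Z ≤ cZ`, and `𝒮(Z) → 0` as `Z → ∞` (Third law), then the
molecular entropy `s_m(ρ,θ) = 𝒮(ρθ^{−3/2})` is positive and satisfies
`s_m(ρ,θ) ≤ C (1 + |log ρ| + max(log θ, 0))`. -/
theorem stmt_9 (c : ℝ) (hc : 0 < c) (P S : ℝ → ℝ)
    (hP : ContDiffOn ℝ 1 P (Ioi 0)) (hS : ContDiffOn ℝ 1 S (Ioi 0))
    (hS' : ∀ Z : ℝ, 0 < Z →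
      deriv S Z = -(3/2) * (5/3 * P Z - deriv P Z * Z) / Z^2)
    (hstab : ∀ Z : ℝ, 0 < Z →
      0 < 5/3 * P Z - deriv P Z * Z ∧ 5/3 * P Z - deriv P Z * Z ≤ c * Z)
    (hthird : Filter.Tendsto S Filter.atTop (nhds 0)) :
    (∀ ρ θ : ℝ, 0 < ρ → 0 < θ → 0 < S (ρ * θ ^ (-(3:ℝ)/2))) ∧
    ∃ C : ℝ, 0 < C ∧ ∀ ρ θ : ℝ, 0 < ρ → 0 < θ →
      S (ρ * θ ^ (-(3:ℝ)/2)) ≤ C * (1 + |Real.log ρ| + max (Real.log θ) 0) := by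
  have hderiv_neg : ∀ z : ℝ, 0 < z → deriv S z < 0 := by
    intro z hz
    rw [hS' z hz]
    have hE := (hstab z hz).1
    apply div_neg_of_neg_of_pos (by nlinarith) (by positivity)
  have hanti : StrictAntiOn S (Ioi 0) := by
    apply strictAntiOn_of_deriv_neg (convex_Ioi 0) hS.continuousOn
    intro x hx
    rw [interior_Ioi] at hx
    exact hderiv_neg x hx
  -- nonnegativity of S on Ioi 0
  have hnonneg : ∀ z : ℝ, 0 < z → 0 ≤ S z := by
    intro z hz
    refine le_of_tendsto hthird ?_
    filter_upwards [Filter.eventually_gt_atTop z, Filter.eventually_gt_atTop 0] with w hw hw0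
    exact (hanti (mem_Ioi.2 hz) (mem_Ioi.2 hw0) hw).le
  have hpos : ∀ z : ℝ, 0 < z → 0 < S z := by
    intro z hz
    exact lt_of_le_of_lt (hnonneg (z + 1) (by linarith))
      (hanti (mem_Ioi.2 hz) (mem_Ioi.2 (by linarith)) (by linarith))
  -- monotone auxiliary function g = S + (3/2)c log
  set g : ℝ → ℝ := fun z => S z + 3 / 2 * c * Real.log z with hg
  have hSdiff : ∀ z : ℝ, 0 < z → DifferentiableAt ℝ S z := fun z hz =>
    (hS.contDiffAt (isOpen_Ioi.mem_nhds hz)).differentiableAt one_ne_zero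
  have hgderiv : ∀ z : ℝ, 0 < z →
      HasDerivAt g (deriv S z + 3 / 2 * c * z⁻¹) z := by
    intro z hz
    exact ((hSdiff z hz).hasDerivAt).add
      (((Real.hasDerivAt_log hz.ne').const_mul (3 / 2 * c)))
  have hgmono : MonotoneOn g (Ioi 0) := by
    apply monotoneOn_of_hasDerivWithinAt_nonneg (convex_Ioi 0)
      (f' := fun z => deriv S z + 3 / 2 * c * z⁻¹)
    · exact hS.continuousOn.add
        ((Real.continuousOn_log.mono (by intro x hx; simp at hx ⊢; exact ne_of_gt hx)).const_smul
          (3 / 2 * c))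
    · intro x hx
      rw [interior_Ioi] at hx
      exact (hgderiv x hx).hasDerivWithinAt
    · intro x hx
      rw [interior_Ioi] at hx
      have hx0 : (0:ℝ) < x := hx
      have hE := hstab x hx0
      have hx2 : (0:ℝ) < x ^ 2 := by positivity
      have hd : deriv S x * x ^ 2 = -(3/2) * (5/3 * P x - deriv P x * x) := by
        rw [hS' x hx0]; field_simp
      have hinv : x⁻¹ * x ^ 2 = x := by
        rw [sq, ← mul_assoc, inv_mul_cancel₀ hx0.ne', one_mul]
      nlinarith [hE.2, hx2, hd, hinv]
  -- bound: S z ≤ S 1 + (3/2)c * max (-log z) 0 for z > 0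
  have hbound : ∀ z : ℝ, 0 < z → S z ≤ S 1 + 3 / 2 * c * max (-Real.log z) 0 := by
    intro z hz
    rcases le_or_gt 1 z with h | h
    · have h1 : S z ≤ S 1 := by
        rcases eq_or_lt_of_le h with h' | h'
        · exact le_of_eq (by rw [← h'])
        · exact (hanti (by norm_num) (mem_Ioi.2 hz) h').le
      have : 0 ≤ 3 / 2 * c * max (-Real.log z) 0 := by positivity
      linarith
    · have hlog : Real.log z < 0 := Real.log_neg hz h
      have hmax : max (-Real.log z) 0 = -Real.log z := max_eq_left (by linarith)
      have h1 : g z ≤ g 1 := hgmono (by simpa using hz) (by simp) h.le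
      simp only [hg, Real.log_one, mul_zero, add_zero] at h1
      rw [hmax]; linarith
  constructor
  · intro ρ θ hρ hθ
    exact hpos _ (mul_pos hρ (Real.rpow_pos_of_pos hθ _))
  · refine ⟨S 1 + 9 / 4 * c, by have := hpos 1 one_pos; linarith, ?_⟩
    intro ρ θ hρ hθ
    have hθp : (0:ℝ) < θ ^ (-(3:ℝ)/2) := Real.rpow_pos_of_pos hθ _
    have hz : 0 < ρ * θ ^ (-(3:ℝ)/2) := mul_pos hρ hθp
    have hlogz : Real.log (ρ * θ ^ (-(3:ℝ)/2)) = Real.log ρ + (-(3:ℝ)/2) * Real.log θ := by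
      rw [Real.log_mul hρ.ne' hθp.ne', Real.log_rpow hθ]
    have hmaxle : max (-Real.log (ρ * θ ^ (-(3:ℝ)/2))) 0
        ≤ |Real.log ρ| + 3 / 2 * max (Real.log θ) 0 := by
      apply max_le
      · rw [hlogz]
        have h1 : -Real.log ρ ≤ |Real.log ρ| := neg_le_abs _
        have h2 : Real.log θ ≤ max (Real.log θ) 0 := le_max_left _ _
        linarith
      · positivity
    have hb := hbound _ hz
    have hS1 := hpos 1 one_pos
    have hA : (0:ℝ) ≤ |Real.log ρ| := abs_nonneg _
    have hB : (0:ℝ) ≤ max (Real.log θ) 0 := le_max_right _ _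
    calc S (ρ * θ ^ (-(3:ℝ)/2))
        ≤ S 1 + 3 / 2 * c * (|Real.log ρ| + 3 / 2 * max (Real.log θ) 0) := by
          have : 3 / 2 * c * max (-Real.log (ρ * θ ^ (-(3:ℝ)/2))) 0
              ≤ 3 / 2 * c * (|Real.log ρ| + 3 / 2 * max (Real.log θ) 0) := by
            apply mul_le_mul_of_nonneg_left hmaxle (by positivity)
          linarith
      _ ≤ (S 1 + 9 / 4 * c) * (1 + |Real.log ρ| + max (Real.log θ) 0) := by nlinarith
end

section
/- Let T > 0, μ > 0, and let r : [0,1] → (0,∞) be continuous. Let U : [0,T] × ℝ² × [0,1] → ℝ² and Π : [0,T] × ℝ² × [0,1] → ℝ be continuous, 2-periodic in each horizontal coordinate, with U of class C¹ in t and C² in x = (x_h, x₃) and Π of class C¹ in x, all with jointly continuous derivatives. Suppose that on (0,T) × ℝ² × (0,1): div_h U = 0 and r(x₃) ( ∂_t U + (U·∇_h)U ) + ∇_h Π = μ ( Δ_h U + ∂²_{x₃x₃} U ), and that U(t, x_h, 0) = U(t, x_h, 1) = 0 for all t, x_h. Then the horizontal average Ū(t, x₃) := ∫_{[-1,1]²}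 U(t, x_h, x₃) dx_h satisfies the one-dimensional heat equation r(x₃) ∂_t Ū(t,x₃) = μ ∂²_{x₃x₃} Ū(t,x₃) on (0,T) × (0,1), with boundary conditions Ū(t,0) = Ū(t,1) = 0. -/
open Set MeasureTheory

open Metric

section helpers

variable {V : Type*} [NormedAddCommGroup V] [NormedSpace ℝ V] [CompleteSpace V]

lemma ftc_zero {f f' : ℝ → V} (h : ∀ x, HasDerivAt f (f' x) x)
    (hc : Continuous f') (hp : f 1 = f (-1)) :
    ∫ y in Icc (-1 : ℝ) 1, f' y = 0 := by
  rw [MeasureTheory.integral_Icc_eq_integral_Ioc,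
    ← intervalIntegral.integral_of_le (by norm_num : (-1:ℝ) ≤ 1),
    intervalIntegral.integral_eq_sub_of_hasDerivAt (fun x _ => h x)
      (hc.intervalIntegrable _ _), hp, sub_self]

lemma fderiv_shift {E : Type*} [NormedAddCommGroup E] [NormedSpace ℝ E]
    (g : E → V) (hg : Differentiable ℝ g) (c : E)
    (hper : ∀ x, g (x + c) = g x) (x : E) :
    fderiv ℝ g (x + c) = fderiv ℝ g x := by
  have h1 : HasFDerivAt (fun y => g (y + c)) (fderiv ℝ g (x + c)) x := by
    have := ((hg (x + c)).hasFDerivAt).comp x ((hasFDerivAt_id x).add_const c)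
    exact this
  have h2 : (fun y => g (y + c)) = g := funext fun y => hper y
  rw [h2] at h1
  exact h1.fderiv.symm

end helpers

section helpers2

variable {V : Type*} [NormedAddCommGroup V] [NormedSpace ℝ V] [CompleteSpace V]

lemma per_int_zero (φ : (Fin 2 → ℝ) → V) (hφ : ContDiff ℝ 1 φ)
    (hper : ∀ (x : Fin 2 → ℝ) (k : Fin 2 → ℤ), φ (x + fun i => 2 * (k i : ℝ)) = φ x)
    (i : Fin 2) :
    ∫ x in Icc (-1 : Fin 2 → ℝ) 1, fderiv ℝ φ x (Pi.single i 1) = 0 := by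
  have hφd : Differentiable ℝ φ := hφ.differentiable one_ne_zero
  set F : (Fin 2 → ℝ) → V := fun x => fderiv ℝ φ x (Pi.single i 1) with hFdef
  have hFc : Continuous F := (hφ.continuous_fderiv one_ne_zero).clm_apply continuous_const
  -- derivative along a line
  have key : ∀ (c d : Fin 2 → ℝ) (y : ℝ),
      HasDerivAt (fun y : ℝ => φ (c + y • d)) (fderiv ℝ φ (c + y • d) d) y := by
    intro c d y
    have hcurve : HasDerivAt (fun y : ℝ => c + y • d) d y := by
      simpa using ((hasDerivAt_id y).smul_const d).const_add c
    exact (hφd (c + y • d)).hasFDerivAt.comp_hasDerivAt y hcurve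
  -- transport to ℝ × ℝ
  have hsymm : ∀ p : ℝ × ℝ, (MeasurableEquiv.finTwoArrow (α := ℝ)).symm p = ![p.1, p.2] := by
    intro p; funext j; fin_cases j <;> rfl
  have hpre : (MeasurableEquiv.finTwoArrow (α := ℝ)).symm ⁻¹' (Icc (-1) 1)
      = Icc (-1 : ℝ) 1 ×ˢ Icc (-1 : ℝ) 1 := by
    ext p
    simp only [mem_preimage, hsymm, mem_Icc, Pi.le_def, Fin.forall_fin_two, mem_prod]
    constructor
    · rintro ⟨⟨h1, h2⟩, h3, h4⟩
      exact ⟨⟨by simpa using h1, by simpa using h3⟩, ⟨by simpa using h2, by simpa using h4⟩⟩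
    · rintro ⟨⟨h1, h2⟩, h3, h4⟩
      refine ⟨⟨by simpa using h1, by simpa using h3⟩, by simpa using h2, by simpa using h4⟩
  have htrans : ∫ x in Icc (-1 : Fin 2 → ℝ) 1, F x
      = ∫ p in Icc (-1 : ℝ) 1 ×ˢ Icc (-1 : ℝ) 1, F ![p.1, p.2] := by
    rw [← hpre, ← ((volume_preserving_finTwoArrow ℝ).symm).setIntegral_preimage_emb
      (MeasurableEquiv.finTwoArrow (α := ℝ)).symm.measurableEmbedding F]
    exact setIntegral_congr_fun ((MeasurableEquiv.finTwoArrow (α := ℝ)).symm.measurable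
      measurableSet_Icc) (fun p _ => by rw [hsymm])
  have hcι : Continuous fun p : ℝ × ℝ => (![p.1, p.2] : Fin 2 → ℝ) := by
    apply continuous_pi
    intro j
    fin_cases j
    · exact continuous_fst
    · exact continuous_snd
  have hint : IntegrableOn (fun p : ℝ × ℝ => F ![p.1, p.2])
      (Icc (-1 : ℝ) 1 ×ˢ Icc (-1 : ℝ) 1) := by
    exact ((hFc.comp hcι).continuousOn).integrableOn_compact (isCompact_Icc.prod isCompact_Icc)
  rw [htrans]
  rw [show (volume : Measure (ℝ × ℝ)) = (volume : Measure ℝ).prod volume from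
    (Measure.volume_eq_prod ℝ ℝ)]
  rw [setIntegral_prod _ (by rw [← Measure.volume_eq_prod]; exact hint)]
  have hi : i = 0 ∨ i = 1 := by omega
  rcases hi with rfl | rfl
  · -- differentiate in the first coordinate: swap the integrals first
    have hswap : ∫ x in Icc (-1:ℝ) 1, ∫ y in Icc (-1:ℝ) 1, F ![x, y]
        = ∫ y in Icc (-1:ℝ) 1, ∫ x in Icc (-1:ℝ) 1, F ![x, y] := by
      apply MeasureTheory.integral_integral_swap
      rw [Measure.prod_restrict]
      exact hint
    rw [hswap]
    have inner : ∀ y : ℝ, ∫ x in Icc (-1:ℝ) 1, F ![x, y] = 0 := by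
      intro y
      have hpt : ∀ a : ℝ, (![(0:ℝ), y] + a • (Pi.single 0 1 : Fin 2 → ℝ)) = ![a, y] := by
        intro a; funext j; fin_cases j <;> simp
      have hder : ∀ x : ℝ, HasDerivAt (fun x' => φ ![x', y]) (F ![x, y]) x := by
        intro x
        have h0 := key ![0, y] (Pi.single 0 1) x
        simp only [hpt] at h0
        exact h0
      apply ftc_zero hder ((hFc.comp hcι).comp (continuous_id.prodMk continuous_const))
      have hp := hper ![-1, y] ![1, 0]
      have : (![-1, y] + fun j => 2 * ((![1, 0] : Fin 2 → ℤ) j : ℝ)) = ![1, y] := by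
        funext j; fin_cases j <;> norm_num
      rw [this] at hp
      exact hp
    rw [setIntegral_congr_fun measurableSet_Icc (fun y _ => inner y)]
    simp
  · -- differentiate in the second coordinate
    have inner : ∀ x : ℝ, ∫ y in Icc (-1:ℝ) 1, F ![x, y] = 0 := by
      intro x
      have hpt : ∀ a : ℝ, (![x, (0:ℝ)] + a • (Pi.single 1 1 : Fin 2 → ℝ)) = ![x, a] := by
        intro a; funext j; fin_cases j <;> simp
      have hder : ∀ y : ℝ, HasDerivAt (fun y' => φ ![x, y']) (F ![x, y]) y := by
        intro y
        have h0 := key ![x, 0] (Pi.single 1 1) y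
        simp only [hpt] at h0
        exact h0
      apply ftc_zero hder ((hFc.comp hcι).comp (continuous_const.prodMk continuous_id))
      have hp := hper ![x, -1] ![0, 1]
      have : (![x, -1] + fun j => 2 * ((![0, 1] : Fin 2 → ℤ) j : ℝ)) = ![x, 1] := by
        funext j; fin_cases j <;> norm_num
      rw [this] at hp
      exact hp
    rw [setIntegral_congr_fun measurableSet_Icc (fun x _ => inner x)]
    simp

end helpers2

section helpers3

variable {V : Type*} [NormedAddCommGroup V] [NormedSpace ℝ V] [CompleteSpace V]

lemma hasDerivAt_setIntegral {F F' : ℝ → (Fin 2 → ℝ) → V} {t : ℝ} {I : Set ℝ}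
    (hI : IsOpen I) (ht : t ∈ I)
    (hF : ∀ s ∈ I, Continuous (F s))
    (hF' : ContinuousOn (fun q : ℝ × (Fin 2 → ℝ) => F' q.1 q.2)
      (I ×ˢ (univ : Set (Fin 2 → ℝ))))
    (hd : ∀ s ∈ I, ∀ x, HasDerivAt (fun u => F u x) (F' s x) s) :
    HasDerivAt (fun s => ∫ x in Icc (-1 : Fin 2 → ℝ) 1, F s x)
      (∫ x in Icc (-1 : Fin 2 → ℝ) 1, F' t x) t := by
  obtain ⟨ε, hε, hball⟩ := Metric.isOpen_iff.1 hI t ht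
  have hcb : closedBall t (ε/2) ⊆ I :=
    (closedBall_subset_ball (by linarith)).trans hball
  have hKc : IsCompact (closedBall t (ε/2) ×ˢ Icc (-1 : Fin 2 → ℝ) 1) :=
    (isCompact_closedBall t (ε/2)).prod isCompact_Icc
  obtain ⟨C, hC⟩ := hKc.exists_bound_of_continuousOn
    (hF'.mono (prod_mono hcb (subset_univ _)))
  have hFtc : Continuous (F' t) := by
    have := hF'.comp_continuous (continuous_const.prodMk continuous_id
      : Continuous fun x : Fin 2 → ℝ => (t, x)) (fun x => by simp [ht])
    exact this
  refine (hasDerivAt_integral_of_dominated_loc_of_deriv_le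
    (F := F) (F' := F') (bound := fun _ => C) (s := ball t (ε/2)) (ball_mem_nhds t (by linarith)) ?_ ?_ ?_ ?_ ?_ ?_).2
  · filter_upwards [hI.mem_nhds ht] with s hs using (hF s hs).aestronglyMeasurable
  · exact ((hF t ht).continuousOn).integrableOn_compact isCompact_Icc
  · exact hFtc.aestronglyMeasurable
  · apply ae_restrict_of_forall_mem measurableSet_Icc
    intro x hx s hs
    exact hC (s, x) ⟨ball_subset_closedBall hs, hx⟩
  · exact integrableOn_const isCompact_Icc.measure_lt_top.ne
  · apply ae_restrict_of_forall_mem measurableSet_Icc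
    intro x _ s hs
    exact hd s (hcb (ball_subset_closedBall hs)) x

end helpers3

/-- for Majda's "stack of pancakes" system
`div_h U = 0`, `r(x₃)(∂_t U + (U·∇_h)U) + ∇_h Π = μ(Δ_h U + ∂²_{x₃x₃} U)`
in the horizontally `2`-periodic layer `ℝ² × (0,1)` with no-slip conditions at
`x₃ = 0, 1`, the horizontal average `Ū(t,x₃) = ∫_{[-1,1]²} U(t,x_h,x₃) dx_h`
solves the one-dimensional heat equation `r(x₃) ∂_t Ū = μ ∂²_{x₃x₃} Ū` on
`(0,T) × (0,1)` with `Ū(t,0) = Ū(t,1) = 0`. -/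
theorem stmt_15 (T μ : ℝ) (hT : 0 < T) (hμ : 0 < μ)
    (r : ℝ → ℝ) (hr : ContinuousOn r (Icc 0 1))
    (hrpos : ∀ x₃ ∈ Icc (0:ℝ) 1, 0 < r x₃)
    (U : ℝ → (Fin 2 → ℝ) → ℝ → (Fin 2 → ℝ)) (Pres : ℝ → (Fin 2 → ℝ) → ℝ → ℝ)
    -- 2-periodicity in each horizontal coordinate
    (hUper : ∀ (t : ℝ) (xh : Fin 2 → ℝ) (x₃ : ℝ) (k : Fin 2 → ℤ),
      U t (xh + fun i => 2 * (k i : ℝ)) x₃ = U t xh x₃)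
    (hPper : ∀ (t : ℝ) (xh : Fin 2 → ℝ) (x₃ : ℝ) (k : Fin 2 → ℤ),
      Pres t (xh + fun i => 2 * (k i : ℝ)) x₃ = Pres t xh x₃)
    -- continuity of U and Π on the closed space-time domain
    (hUc : ContinuousOn (fun q : ℝ × (Fin 2 → ℝ) × ℝ => U q.1 q.2.1 q.2.2)
      (Icc 0 T ×ˢ (univ ×ˢ Icc 0 1)))
    (hPc : ContinuousOn (fun q : ℝ × (Fin 2 → ℝ) × ℝ => Pres q.1 q.2.1 q.2.2)
      (Icc 0 T ×ˢ (univ ×ˢ Icc 0 1)))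
    -- U is C¹ in time, with jointly continuous time derivative
    (hUt : ∀ t ∈ Ioo 0 T, ∀ (xh : Fin 2 → ℝ), ∀ x₃ ∈ Ioo (0:ℝ) 1,
      DifferentiableAt ℝ (fun s => U s xh x₃) t)
    (hUtc : ContinuousOn
      (fun q : ℝ × (Fin 2 → ℝ) × ℝ => deriv (fun s => U s q.2.1 q.2.2) q.1)
      (Ioo 0 T ×ˢ (univ ×ˢ Ioo 0 1)))
    -- U is C² in the space variable x = (x_h, x₃), with jointly continuous derivatives
    (hUx : ∀ t ∈ Ioo 0 T, ContDiffOn ℝ 2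
      (fun z : (Fin 2 → ℝ) × ℝ => U t z.1 z.2) (univ ×ˢ Ioo 0 1))
    (hUxc : ContinuousOn (fun q : ℝ × (Fin 2 → ℝ) × ℝ =>
        fderiv ℝ (fun z : (Fin 2 → ℝ) × ℝ => U q.1 z.1 z.2) (q.2.1, q.2.2))
      (Ioo 0 T ×ˢ (univ ×ˢ Ioo 0 1)))
    (hUxxc : ContinuousOn (fun q : ℝ × (Fin 2 → ℝ) × ℝ =>
        fderiv ℝ (fderiv ℝ (fun z : (Fin 2 → ℝ) × ℝ => U q.1 z.1 z.2)) (q.2.1, q.2.2))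
      (Ioo 0 T ×ˢ (univ ×ˢ Ioo 0 1)))
    -- Π is C¹ in the space variable
    (hPx : ∀ t ∈ Ioo 0 T, ContDiffOn ℝ 1
      (fun z : (Fin 2 → ℝ) × ℝ => Pres t z.1 z.2) (univ ×ˢ Ioo 0 1))
    -- horizontal incompressibility: div_h U = 0
    (hdiv : ∀ t ∈ Ioo 0 T, ∀ (xh : Fin 2 → ℝ), ∀ x₃ ∈ Ioo (0:ℝ) 1,
      (∑ i, fderiv ℝ (fun y => U t y x₃ i) xh (Pi.single i 1)) = 0)
    -- momentum equation: r(x₃)(∂_t U + (U·∇_h)U) + ∇_h Π = μ(Δ_h U + ∂²_{x₃x₃}U)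
    (hmom : ∀ t ∈ Ioo 0 T, ∀ (xh : Fin 2 → ℝ), ∀ x₃ ∈ Ioo (0:ℝ) 1,
      r x₃ • (deriv (fun s => U s xh x₃) t
          + ∑ i, U t xh x₃ i • fderiv ℝ (fun y => U t y x₃) xh (Pi.single i 1))
        + (fun i => fderiv ℝ (fun y => Pres t y x₃) xh (Pi.single i 1))
        = μ • ((∑ i, fderiv ℝ
              (fun y => fderiv ℝ (fun z => U t z x₃) y (Pi.single i 1)) xh
              (Pi.single i 1))
            + deriv (fun w => deriv (fun v => U t xh v) w) x₃))
    -- no-slip boundary conditions at the two plates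
    (hbc : ∀ t ∈ Icc 0 T, ∀ xh : Fin 2 → ℝ, U t xh 0 = 0 ∧ U t xh 1 = 0) :
    (∀ t ∈ Ioo 0 T, ∀ x₃ ∈ Ioo (0:ℝ) 1,
      r x₃ • deriv (fun s => ∫ xh in Icc (-1 : Fin 2 → ℝ) 1, U s xh x₃) t
        = μ • deriv (fun w =>
            deriv (fun v => ∫ xh in Icc (-1 : Fin 2 → ℝ) 1, U t xh v) w) x₃) ∧
    (∀ t ∈ Icc 0 T,
      (∫ xh in Icc (-1 : Fin 2 → ℝ) 1, U t xh 0) = (0 : Fin 2 → ℝ) ∧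
      (∫ xh in Icc (-1 : Fin 2 → ℝ) 1, U t xh 1) = (0 : Fin 2 → ℝ)) := by
  constructor
  · intro t ht x₃ hx₃
    have htI : t ∈ Icc (0:ℝ) T := Ioo_subset_Icc_self ht
    have hx₃I : x₃ ∈ Icc (0:ℝ) 1 := Ioo_subset_Icc_self hx₃
    have hsOpen : IsOpen ((univ : Set (Fin 2 → ℝ)) ×ˢ Ioo (0:ℝ) 1) :=
      isOpen_univ.prod isOpen_Ioo
    set G : (Fin 2 → ℝ) × ℝ → (Fin 2 → ℝ) := fun z => U t z.1 z.2 with hGdef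
    have hG : ContDiffOn ℝ 2 G ((univ : Set (Fin 2 → ℝ)) ×ˢ Ioo (0:ℝ) 1) := hUx t ht
    have hG1 : ContDiffOn ℝ 1 (fun z => fderiv ℝ G z)
        ((univ : Set (Fin 2 → ℝ)) ×ˢ Ioo (0:ℝ) 1) :=
      hG.fderiv_of_isOpen hsOpen (by norm_num)
    have hGc1 : ContinuousOn (fun z => fderiv ℝ G z)
        ((univ : Set (Fin 2 → ℝ)) ×ˢ Ioo (0:ℝ) 1) :=
      hG.continuousOn_fderiv_of_isOpen hsOpen (by norm_num)
    have hGc2 : ContinuousOn (fun z => fderiv ℝ (fderiv ℝ G) z)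
        ((univ : Set (Fin 2 → ℝ)) ×ˢ Ioo (0:ℝ) 1) :=
      hG1.continuousOn_fderiv_of_isOpen hsOpen le_rfl
    set e3 : (Fin 2 → ℝ) × ℝ := ((0 : Fin 2 → ℝ), (1 : ℝ)) with he3def
    set u1 : (Fin 2 → ℝ) → ℝ → (Fin 2 → ℝ) := fun xh w => fderiv ℝ G (xh, w) e3 with hu1def
    set u2 : (Fin 2 → ℝ) → ℝ → (Fin 2 → ℝ) :=
      fun xh w => fderiv ℝ (fderiv ℝ G) (xh, w) e3 e3 with hu2def
    have hmem : ∀ (xh : Fin 2 → ℝ) {w : ℝ}, w ∈ Ioo (0:ℝ) 1 →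
        (xh, w) ∈ (univ : Set (Fin 2 → ℝ)) ×ˢ Ioo (0:ℝ) 1 :=
      fun xh w hw => Set.mk_mem_prod trivial hw
    have hGdiff : ∀ (xh : Fin 2 → ℝ) {w : ℝ}, w ∈ Ioo (0:ℝ) 1 → DifferentiableAt ℝ G (xh, w) :=
      fun xh w hw => (hG.differentiableOn (by norm_num)).differentiableAt
        (hsOpen.mem_nhds (hmem xh hw))
    have hcurve : ∀ (xh : Fin 2 → ℝ) (w : ℝ), HasDerivAt (fun v : ℝ => (xh, v)) e3 w :=
      fun xh w => (hasDerivAt_const w xh).prodMk (hasDerivAt_id w)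
    have F1 : ∀ (xh : Fin 2 → ℝ) (w : ℝ), w ∈ Ioo (0:ℝ) 1 →
        HasDerivAt (fun v => U t xh v) (u1 xh w) w :=
      fun xh w hw => (hGdiff xh hw).hasFDerivAt.comp_hasDerivAt w (hcurve xh w)
    have hD1diff : ∀ (xh : Fin 2 → ℝ) {w : ℝ}, w ∈ Ioo (0:ℝ) 1 →
        DifferentiableAt ℝ (fun z => fderiv ℝ G z) (xh, w) :=
      fun xh w hw => (hG1.differentiableOn one_ne_zero).differentiableAt
        (hsOpen.mem_nhds (hmem xh hw))
    have F2 : ∀ (xh : Fin 2 → ℝ) (w : ℝ), w ∈ Ioo (0:ℝ) 1 →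
        HasDerivAt (fun v => u1 xh v) (u2 xh w) w := by
      intro xh w hw
      have hA := ((ContinuousLinearMap.apply ℝ (Fin 2 → ℝ) e3).hasFDerivAt.comp (xh, w)
        (hD1diff xh hw).hasFDerivAt).comp_hasDerivAt w (hcurve xh w)
      exact hA
    have hu1c : ContinuousOn (fun z : (Fin 2 → ℝ) × ℝ => u1 z.1 z.2)
        ((univ : Set (Fin 2 → ℝ)) ×ˢ Ioo (0:ℝ) 1) := hGc1.clm_apply continuousOn_const
    have hu2c : ContinuousOn (fun z : (Fin 2 → ℝ) × ℝ => u2 z.1 z.2)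
        ((univ : Set (Fin 2 → ℝ)) ×ˢ Ioo (0:ℝ) 1) :=
      (hGc2.clm_apply continuousOn_const).clm_apply continuousOn_const
    have F5 : ∀ xh : Fin 2 → ℝ,
        deriv (fun w => deriv (fun v => U t xh v) w) x₃ = u2 xh x₃ := by
      intro xh
      have heq : (fun w => deriv (fun v => U t xh v) w) =ᶠ[nhds x₃] fun w => u1 xh w := by
        filter_upwards [isOpen_Ioo.mem_nhds hx₃] with w hw
        exact (F1 xh w hw).deriv
      rw [heq.deriv_eq]
      exact (F2 xh x₃ hx₃).deriv
    -- slice regularity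
    have hgU : ContDiff ℝ 2 (fun y : Fin 2 → ℝ => U t y x₃) := by
      rw [← contDiffOn_univ]
      exact hG.comp (contDiff_prodMk_left x₃).contDiffOn
        (fun y _ => Set.mk_mem_prod trivial hx₃)
    have hgUi : ∀ i : Fin 2, ContDiff ℝ 2 (fun y : Fin 2 → ℝ => U t y x₃ i) := fun i =>
      (ContinuousLinearMap.proj (R := ℝ) (φ := fun _ : Fin 2 => ℝ) i).contDiff.comp hgU
    have hpP : ContDiff ℝ 1 (fun y : Fin 2 → ℝ => Pres t y x₃) := by
      rw [← contDiffOn_univ]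
      exact (hPx t ht).comp (contDiff_prodMk_left x₃).contDiffOn
        (fun y _ => Set.mk_mem_prod trivial hx₃)
    have hφ : ∀ i : Fin 2, ContDiff ℝ 1
        (fun y : Fin 2 → ℝ => fderiv ℝ (fun z => U t z x₃) y (Pi.single i 1)) := fun i =>
      (hgU.fderiv_right (m := 1) (by norm_num)).clm_apply contDiff_const
    have hhi : ∀ i : Fin 2, ContDiff ℝ 1
        (fun y : Fin 2 → ℝ => U t y x₃ i • U t y x₃) := fun i =>
      ((hgUi i).of_le one_le_two).smul (hgU.of_le one_le_two)
    -- rewritten momentum equation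
    have hmomQ : ∀ xh : Fin 2 → ℝ,
        r x₃ • (deriv (fun s => U s xh x₃) t
            + ∑ i, fderiv ℝ (fun y => U t y x₃ i • U t y x₃) xh (Pi.single i 1))
          + (fun i => fderiv ℝ (fun y => Pres t y x₃) xh (Pi.single i 1))
          = μ • ((∑ i, fderiv ℝ
                (fun y => fderiv ℝ (fun z => U t z x₃) y (Pi.single i 1)) xh
                (Pi.single i 1))
              + u2 xh x₃) := by
      intro xh
      have h0 := hmom t ht xh x₃ hx₃
      rw [F5 xh] at h0
      have hNn : (∑ i, U t xh x₃ i • fderiv ℝ (fun y => U t y x₃) xh (Pi.single i 1))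
          = ∑ i, fderiv ℝ (fun y => U t y x₃ i • U t y x₃) xh (Pi.single i 1) := by
        have hrule : ∀ i : Fin 2,
            fderiv ℝ (fun y => U t y x₃ i • U t y x₃) xh (Pi.single i 1)
            = U t xh x₃ i • fderiv ℝ (fun y => U t y x₃) xh (Pi.single i 1)
              + fderiv ℝ (fun y => U t y x₃ i) xh (Pi.single i 1) • U t xh x₃ := by
          intro i
          rw [fderiv_fun_smul ((hgUi i).differentiable (by norm_num) xh)
            (hgU.differentiable (by norm_num) xh)]
          simp
        rw [Finset.sum_congr rfl (fun i _ => hrule i), Finset.sum_add_distrib,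
          ← Finset.sum_smul, hdiv t ht xh x₃ hx₃, zero_smul, add_zero]
      rw [hNn] at h0
      exact h0
    -- continuity / integrability of all the integrands on the square
    have cNt : Continuous (fun xh : Fin 2 → ℝ => deriv (fun s => U s xh x₃) t) :=
      hUtc.comp_continuous
        (continuous_const.prodMk (continuous_id.prodMk continuous_const))
        (fun xh => Set.mk_mem_prod ht (Set.mk_mem_prod trivial hx₃))
    have iNt : Integrable (fun xh : Fin 2 → ℝ => deriv (fun s => U s xh x₃) t)
        (volume.restrict (Icc (-1 : Fin 2 → ℝ) 1)) :=
      cNt.continuousOn.integrableOn_compact isCompact_Icc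
    have cNN : Continuous (fun xh : Fin 2 → ℝ =>
        ∑ i, fderiv ℝ (fun y => U t y x₃ i • U t y x₃) xh (Pi.single i 1)) :=
      continuous_finset_sum _ fun i _ =>
        ((hhi i).continuous_fderiv one_ne_zero).clm_apply continuous_const
    have iNN : Integrable (fun xh : Fin 2 → ℝ =>
        ∑ i, fderiv ℝ (fun y => U t y x₃ i • U t y x₃) xh (Pi.single i 1))
        (volume.restrict (Icc (-1 : Fin 2 → ℝ) 1)) :=
      cNN.continuousOn.integrableOn_compact isCompact_Icc
    have cPp : Continuous (fun xh : Fin 2 → ℝ =>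
        (fun i => fderiv ℝ (fun y => Pres t y x₃) xh (Pi.single i 1) : Fin 2 → ℝ)) :=
      continuous_pi fun i => (hpP.continuous_fderiv one_ne_zero).clm_apply continuous_const
    have iPp : Integrable (fun xh : Fin 2 → ℝ =>
        (fun i => fderiv ℝ (fun y => Pres t y x₃) xh (Pi.single i 1) : Fin 2 → ℝ))
        (volume.restrict (Icc (-1 : Fin 2 → ℝ) 1)) :=
      cPp.continuousOn.integrableOn_compact isCompact_Icc
    have cLl : Continuous (fun xh : Fin 2 → ℝ =>
        ∑ i, fderiv ℝ (fun y => fderiv ℝ (fun z => U t z x₃) y (Pi.single i 1)) xh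
          (Pi.single i 1)) :=
      continuous_finset_sum _ fun i _ =>
        ((hφ i).continuous_fderiv one_ne_zero).clm_apply continuous_const
    have iLl : Integrable (fun xh : Fin 2 → ℝ =>
        ∑ i, fderiv ℝ (fun y => fderiv ℝ (fun z => U t z x₃) y (Pi.single i 1)) xh
          (Pi.single i 1))
        (volume.restrict (Icc (-1 : Fin 2 → ℝ) 1)) :=
      cLl.continuousOn.integrableOn_compact isCompact_Icc
    have cu2x : Continuous (fun xh : Fin 2 → ℝ => u2 xh x₃) :=
      hu2c.comp_continuous (continuous_id.prodMk continuous_const)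
        (fun xh => Set.mk_mem_prod trivial hx₃)
    have iu2 : Integrable (fun xh : Fin 2 → ℝ => u2 xh x₃)
        (volume.restrict (Icc (-1 : Fin 2 → ℝ) 1)) :=
      cu2x.continuousOn.integrableOn_compact isCompact_Icc
    -- the three vanishing integrals
    have hPp0 : ∫ xh in Icc (-1 : Fin 2 → ℝ) 1,
        (fun i => fderiv ℝ (fun y => Pres t y x₃) xh (Pi.single i 1) : Fin 2 → ℝ) = 0 := by
      funext i
      have hcomp := ((ContinuousLinearMap.proj (R := ℝ) (φ := fun _ : Fin 2 => ℝ)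
        i).integral_comp_comm iPp).symm
      refine Eq.trans hcomp ?_
      exact per_int_zero _ hpP (fun x k => hPper t x x₃ k) i
    have hLl0 : ∫ xh in Icc (-1 : Fin 2 → ℝ) 1,
        (∑ i, fderiv ℝ (fun y => fderiv ℝ (fun z => U t z x₃) y (Pi.single i 1)) xh
          (Pi.single i 1)) = 0 := by
      rw [integral_finset_sum _ (fun i _ =>
        (((hφ i).continuous_fderiv one_ne_zero).clm_apply
          continuous_const).continuousOn.integrableOn_compact isCompact_Icc)]
      refine Finset.sum_eq_zero fun i _ => per_int_zero _ (hφ i) ?_ i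
      intro x k
      rw [fderiv_shift (fun z => U t z x₃) (hgU.differentiable (by norm_num)) _
        (fun y => hUper t y x₃ k) x]
    have hNN0 : ∫ xh in Icc (-1 : Fin 2 → ℝ) 1,
        (∑ i, fderiv ℝ (fun y => U t y x₃ i • U t y x₃) xh (Pi.single i 1)) = 0 := by
      rw [integral_finset_sum _ (fun i _ =>
        (((hhi i).continuous_fderiv one_ne_zero).clm_apply
          continuous_const).continuousOn.integrableOn_compact isCompact_Icc)]
      refine Finset.sum_eq_zero fun i _ => per_int_zero _ (hhi i) ?_ i
      intro x k
      rw [hUper t x x₃ k]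
    -- derivative of the average in time
    have I1 : HasDerivAt (fun s => ∫ xh in Icc (-1 : Fin 2 → ℝ) 1, U s xh x₃)
        (∫ xh in Icc (-1 : Fin 2 → ℝ) 1, deriv (fun s => U s xh x₃) t) t := by
      refine hasDerivAt_setIntegral (F := fun s xh => U s xh x₃)
        (F' := fun s xh => deriv (fun u => U u xh x₃) s) isOpen_Ioo ht ?_ ?_ ?_
      · intro s hs
        exact hUc.comp_continuous
          (continuous_const.prodMk (continuous_id.prodMk continuous_const))
          (fun xh => Set.mk_mem_prod (Ioo_subset_Icc_self hs)
            (Set.mk_mem_prod trivial hx₃I))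
      · exact hUtc.comp
          (continuous_fst.prodMk (continuous_snd.prodMk continuous_const)).continuousOn
          (fun q hq => Set.mk_mem_prod hq.1 (Set.mk_mem_prod trivial hx₃))
      · intro s hs xh
        exact (hUt s hs xh x₃ hx₃).hasDerivAt
    -- derivatives of the average in the vertical variable
    have I2 : ∀ w ∈ Ioo (0:ℝ) 1,
        HasDerivAt (fun v => ∫ xh in Icc (-1 : Fin 2 → ℝ) 1, U t xh v)
          (∫ xh in Icc (-1 : Fin 2 → ℝ) 1, u1 xh w) w := by
      intro w hw
      refine hasDerivAt_setIntegral (F := fun v xh => U t xh v)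
        (F' := fun v xh => u1 xh v) isOpen_Ioo hw ?_ ?_ ?_
      · intro v hv
        exact hUc.comp_continuous
          (continuous_const.prodMk (continuous_id.prodMk continuous_const))
          (fun xh => Set.mk_mem_prod htI
            (Set.mk_mem_prod trivial (Ioo_subset_Icc_self hv)))
      · exact hu1c.comp (continuous_snd.prodMk continuous_fst).continuousOn
          (fun q hq => Set.mk_mem_prod trivial hq.1)
      · intro v hv xh
        exact F1 xh v hv
    have I3 : HasDerivAt (fun w => ∫ xh in Icc (-1 : Fin 2 → ℝ) 1, u1 xh w)
        (∫ xh in Icc (-1 : Fin 2 → ℝ) 1, u2 xh x₃) x₃ := by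
      refine hasDerivAt_setIntegral (F := fun w xh => u1 xh w)
        (F' := fun w xh => u2 xh w) isOpen_Ioo hx₃ ?_ ?_ ?_
      · intro w hw
        exact hu1c.comp_continuous (continuous_id.prodMk continuous_const)
          (fun xh => Set.mk_mem_prod trivial hw)
      · exact hu2c.comp (continuous_snd.prodMk continuous_fst).continuousOn
          (fun q hq => Set.mk_mem_prod trivial hq.1)
      · intro w hw xh
        exact F2 xh w hw
    have hRHS : deriv (fun w =>
        deriv (fun v => ∫ xh in Icc (-1 : Fin 2 → ℝ) 1, U t xh v) w) x₃
        = ∫ xh in Icc (-1 : Fin 2 → ℝ) 1, u2 xh x₃ := by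
      have heq : (fun w => deriv (fun v => ∫ xh in Icc (-1 : Fin 2 → ℝ) 1, U t xh v) w)
          =ᶠ[nhds x₃] fun w => ∫ xh in Icc (-1 : Fin 2 → ℝ) 1, u1 xh w := by
        filter_upwards [isOpen_Ioo.mem_nhds hx₃] with w hw
        exact (I2 w hw).deriv
      rw [heq.deriv_eq]
      exact I3.deriv
    -- assemble
    rw [I1.deriv, hRHS]
    have hf1 : Integrable (fun xh : Fin 2 → ℝ => r x₃ • (deriv (fun s => U s xh x₃) t
        + ∑ i, fderiv ℝ (fun y => U t y x₃ i • U t y x₃) xh (Pi.single i 1)))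
        (volume.restrict (Icc (-1 : Fin 2 → ℝ) 1)) := by
      exact (iNt.add iNN).smul (r x₃)
    have hL : ∫ xh in Icc (-1 : Fin 2 → ℝ) 1,
        (r x₃ • (deriv (fun s => U s xh x₃) t
            + ∑ i, fderiv ℝ (fun y => U t y x₃ i • U t y x₃) xh (Pi.single i 1))
          + (fun i => fderiv ℝ (fun y => Pres t y x₃) xh (Pi.single i 1)))
        = r x₃ • ∫ xh in Icc (-1 : Fin 2 → ℝ) 1, deriv (fun s => U s xh x₃) t := by
      rw [integral_add hf1 iPp, integral_smul, integral_add iNt iNN, hNN0, hPp0,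
        add_zero, add_zero]
    have hR : ∫ xh in Icc (-1 : Fin 2 → ℝ) 1,
        μ • ((∑ i, fderiv ℝ (fun y => fderiv ℝ (fun z => U t z x₃) y (Pi.single i 1)) xh
            (Pi.single i 1)) + u2 xh x₃)
        = μ • ∫ xh in Icc (-1 : Fin 2 → ℝ) 1, u2 xh x₃ := by
      rw [integral_smul, integral_add iLl iu2, hLl0, zero_add]
    have step2 : ∫ xh in Icc (-1 : Fin 2 → ℝ) 1,
        (r x₃ • (deriv (fun s => U s xh x₃) t
            + ∑ i, fderiv ℝ (fun y => U t y x₃ i • U t y x₃) xh (Pi.single i 1))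
          + (fun i => fderiv ℝ (fun y => Pres t y x₃) xh (Pi.single i 1)))
        = ∫ xh in Icc (-1 : Fin 2 → ℝ) 1,
        μ • ((∑ i, fderiv ℝ (fun y => fderiv ℝ (fun z => U t z x₃) y (Pi.single i 1)) xh
            (Pi.single i 1)) + u2 xh x₃) :=
      setIntegral_congr_fun measurableSet_Icc (fun xh _ => hmomQ xh)
    rw [← hL, step2, hR]
  · intro t htI
    refine ⟨?_, ?_⟩
    · rw [setIntegral_congr_fun measurableSet_Icc
        (fun xh _ => (hbc t htI xh).1 : EqOn (fun xh => U t xh 0) (fun _ => (0:Fin 2 → ℝ))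
          (Icc (-1 : Fin 2 → ℝ) 1))]
      simp
    · rw [setIntegral_congr_fun measurableSet_Icc
        (fun xh _ => (hbc t htI xh).2 : EqOn (fun xh => U t xh 1) (fun _ => (0:Fin 2 → ℝ))
          (Icc (-1 : Fin 2 → ℝ) 1))]
      simp
end
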